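/- Assume N ≥ 2 and let φ : ℝ → E be continuously differentiable on [0,T]. Then Δt · Σ_{n=1}^{N−1} ‖(φ(t_{n+1}) − φ(t_{n−1}))/(2Δt)‖² ≤ ∫_0^T ‖φ′(t)‖² dt. (Central-difference estimate used in the interpolation-error lemma of the paper.) -/

import Mathlib

open MeasureTheory intervalIntegral Set Finset

/-- Cauchy–Schwarz for interval integrals of nonnegative continuous functions. -/
lemma cs_interval (a b : ℝ) (hab : a ≤ b) (g : ℝ → ℝ)
    (hg : ContinuousOn g (Set.Icc a b)) (hg0 : ∀ x, 0 ≤ g x) :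
    (∫ x in a..b, g x) ^ 2 ≤ (b - a) * ∫ x in a..b, g x ^ 2 := by
  set μ := volume.restrict (Set.Ioc a b) with hμ
  haveI : IsFiniteMeasure μ := ⟨by
    rw [hμ, Measure.restrict_apply_univ, Real.volume_Ioc]
    exact ENNReal.ofReal_lt_top⟩
  have hconj : Real.HolderConjugate 2 2 := Real.holderConjugate_iff.2 ⟨one_lt_two, by norm_num⟩
  have hmeas : AEStronglyMeasurable g μ :=
    (hg.mono Set.Ioc_subset_Icc_self).aestronglyMeasurable measurableSet_Ioc
  obtain ⟨C, hC⟩ := isCompact_Icc.exists_bound_of_continuousOn hg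
  have hgmem : MemLp g (ENNReal.ofReal 2) μ := by
    refine MemLp.of_bound hmeas C ?_
    refine (ae_restrict_iff' measurableSet_Ioc).2 (ae_of_all _ fun x hx => ?_)
    exact hC x (Set.Ioc_subset_Icc_self hx)
  have h1mem : MemLp (fun _ : ℝ => (1:ℝ)) (ENNReal.ofReal 2) μ := memLp_const 1
  have key := integral_mul_le_Lp_mul_Lq_of_nonneg (μ := μ) hconj
    (ae_of_all _ hg0) (ae_of_all _ fun _ => zero_le_one) hgmem h1mem
  have h1 : (∫ x, g x * 1 ∂μ) = ∫ x in a..b, g x := by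
    simp [intervalIntegral.integral_of_le hab, hμ]
  have h2 : (∫ x, g x ^ (2:ℝ) ∂μ) = ∫ x in a..b, g x ^ 2 := by
    rw [intervalIntegral.integral_of_le hab]
    refine integral_congr_ae (ae_of_all _ fun x => ?_)
    simp only []
    rw [show ((2:ℝ):ℝ) = ((2:ℕ):ℝ) by norm_num, Real.rpow_natCast]
  have h3 : (∫ _ : ℝ, (1:ℝ) ^ (2:ℝ) ∂μ) = b - a := by
    simp [hμ, Real.volume_Ioc, ENNReal.toReal_ofReal (sub_nonneg.2 hab), hab]
  rw [h1, h2, h3] at key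
  have hX : (0:ℝ) ≤ ∫ x in a..b, g x ^ 2 := by
    rw [intervalIntegral.integral_of_le hab]
    exact integral_nonneg fun x => sq_nonneg _
  have hY : (0:ℝ) ≤ b - a := sub_nonneg.2 hab
  have hgint : (0:ℝ) ≤ ∫ x in a..b, g x := by
    rw [intervalIntegral.integral_of_le hab]
    exact integral_nonneg fun x => hg0 x
  calc (∫ x in a..b, g x) ^ 2
      ≤ ((∫ x in a..b, g x ^ 2) ^ (1/2:ℝ) * (b - a) ^ (1/2:ℝ)) ^ 2 := by
        exact pow_le_pow_left₀ hgint key 2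
    _ = (b - a) * ∫ x in a..b, g x ^ 2 := by
        rw [← Real.mul_rpow hX hY, ← Real.rpow_natCast _ 2, ← Real.rpow_mul (mul_nonneg hX hY)]
        norm_num [mul_comm]

/-- Central-difference estimate: for φ continuously differentiable on [0,T],
with Δt = T/N, tₙ = n·Δt and N ≥ 2,
Δt · Σ_{n=1}^{N−1} ‖(φ(t_{n+1}) − φ(t_{n−1}))/(2Δt)‖² ≤ ∫₀^T ‖φ′‖². -/
theorem central_difference_estimate
    {E : Type*} [NormedAddCommGroup E] [NormedSpace ℝ E] [CompleteSpace E]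
    (T : ℝ) (hT : 0 < T) (N : ℕ) (hN : 2 ≤ N)
    (Δt : ℝ) (hΔt : Δt = T / N)
    (φ φ' : ℝ → E)
    (hφ' : ∀ t ∈ Set.Icc (0:ℝ) T, HasDerivWithinAt φ (φ' t) (Set.Icc (0:ℝ) T) t)
    (hφ'c : ContinuousOn φ' (Set.Icc (0:ℝ) T)) :
    Δt * ∑ n ∈ Finset.Ico 1 N,
        ‖(2 * Δt)⁻¹ • (φ (((n : ℝ) + 1) * Δt) - φ (((n : ℝ) - 1) * Δt))‖ ^ 2
      ≤ ∫ t in (0:ℝ)..T, ‖φ' t‖ ^ 2 := by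
  have hNpos : (0:ℝ) < N := by positivity
  have hΔpos : 0 < Δt := by rw [hΔt]; positivity
  have hNT : (N:ℝ) * Δt = T := by rw [hΔt]; field_simp
  -- continuity/integrability of the integrand
  have hfc : ContinuousOn (fun t => ‖φ' t‖ ^ 2) (Set.Icc 0 T) := hφ'c.norm.pow 2
  have hfi : ∀ c d : ℝ, 0 ≤ c → c ≤ d → d ≤ T →
      IntervalIntegrable (fun t => ‖φ' t‖ ^ 2) volume c d := fun c d hc hcd hdT =>
    (hfc.mono (Set.Icc_subset_Icc hc hdT)).intervalIntegrable_of_Icc hcd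
  have hnormint : ∀ c d : ℝ, 0 ≤ c → c ≤ d → d ≤ T →
      IntervalIntegrable (fun t => ‖φ' t‖) volume c d := fun c d hc hcd hdT =>
    ((hφ'c.norm).mono (Set.Icc_subset_Icc hc hdT)).intervalIntegrable_of_Icc hcd
  have hφ'int : ∀ c d : ℝ, 0 ≤ c → c ≤ d → d ≤ T →
      IntervalIntegrable φ' volume c d := fun c d hc hcd hdT =>
    (hφ'c.mono (Set.Icc_subset_Icc hc hdT)).intervalIntegrable_of_Icc hcd
  have hφc : ContinuousOn φ (Set.Icc 0 T) := fun t ht =>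
    (hφ' t ht).continuousWithinAt
  -- FTC on subintervals
  have hftc : ∀ c d : ℝ, 0 ≤ c → c ≤ d → d ≤ T →
      (∫ t in c..d, φ' t) = φ d - φ c := by
    intro c d hc hcd hdT
    refine integral_eq_sub_of_hasDeriv_right_of_le hcd
      (hφc.mono (Set.Icc_subset_Icc hc hdT)) (fun x hx => ?_)
      (hφ'int c d hc hcd hdT)
    have hx0T : x ∈ Set.Ioo (0:ℝ) T := ⟨lt_of_le_of_lt hc hx.1, lt_of_lt_of_le hx.2 hdT⟩
    exact ((hφ' x (Set.Ioo_subset_Icc_self hx0T)).hasDerivAt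
      (Icc_mem_nhds hx0T.1 hx0T.2)).hasDerivWithinAt
  -- per-term bound
  have hterm : ∀ n ∈ Finset.Ico 1 N,
      ‖(2 * Δt)⁻¹ • (φ (((n : ℝ) + 1) * Δt) - φ (((n : ℝ) - 1) * Δt))‖ ^ 2
        ≤ (2 * Δt)⁻¹ * ∫ t in (((n:ℝ) - 1) * Δt)..(((n:ℝ) + 1) * Δt), ‖φ' t‖ ^ 2 := by
    intro n hn
    rw [Finset.mem_Ico] at hn
    have hn1 : (1:ℝ) ≤ (n:ℝ) := by exact_mod_cast hn.1
    have hnN : (n:ℝ) + 1 ≤ (N:ℝ) := by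
      have : (n:ℕ) + 1 ≤ N := hn.2
      exact_mod_cast this
    set a := ((n:ℝ) - 1) * Δt with ha
    set b := ((n:ℝ) + 1) * Δt with hb
    have h0a : 0 ≤ a := mul_nonneg (by linarith) hΔpos.le
    have hab : a ≤ b := by nlinarith
    have hbT : b ≤ T := by rw [← hNT]; nlinarith
    have hba : b - a = 2 * Δt := by ring
    have hftc' : φ b - φ a = ∫ t in a..b, φ' t := (hftc a b h0a hab hbT).symm
    have hnorm : ‖φ b - φ a‖ ≤ ∫ t in a..b, ‖φ' t‖ := by
      rw [hftc']
      exact intervalIntegral.norm_integral_le_integral_norm hab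
    have hcs : (∫ t in a..b, ‖φ' t‖) ^ 2 ≤ (2 * Δt) * ∫ t in a..b, ‖φ' t‖ ^ 2 := by
      rw [← hba]
      exact cs_interval a b hab _ ((hφ'c.norm).mono (Set.Icc_subset_Icc h0a hbT))
        (fun x => norm_nonneg _)
    have h2Δ : (0:ℝ) < 2 * Δt := by linarith
    rw [norm_smul, norm_inv, Real.norm_of_nonneg h2Δ.le, mul_pow]
    have hsq : ‖φ b - φ a‖ ^ 2 ≤ (2 * Δt) * ∫ t in a..b, ‖φ' t‖ ^ 2 :=
      le_trans (pow_le_pow_left₀ (norm_nonneg _) hnorm 2) hcs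
    calc ((2*Δt)⁻¹) ^ 2 * ‖φ b - φ a‖ ^ 2
        ≤ ((2*Δt)⁻¹) ^ 2 * ((2 * Δt) * ∫ t in a..b, ‖φ' t‖ ^ 2) := by
          exact mul_le_mul_of_nonneg_left hsq (by positivity)
      _ = (2 * Δt)⁻¹ * ∫ t in a..b, ‖φ' t‖ ^ 2 := by
          field_simp
  -- sum the bounds
  have hsum : ∑ n ∈ Finset.Ico 1 N,
      ‖(2 * Δt)⁻¹ • (φ (((n : ℝ) + 1) * Δt) - φ (((n : ℝ) - 1) * Δt))‖ ^ 2
      ≤ (2 * Δt)⁻¹ * ∑ n ∈ Finset.Ico 1 N,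
          ∫ t in (((n:ℝ) - 1) * Δt)..(((n:ℝ) + 1) * Δt), ‖φ' t‖ ^ 2 := by
    rw [Finset.mul_sum]
    exact Finset.sum_le_sum hterm
  -- split each integral and telescope
  have hintn : ∀ n ∈ Finset.Ico 1 N,
      (∫ t in (((n:ℝ) - 1) * Δt)..(((n:ℝ) + 1) * Δt), ‖φ' t‖ ^ 2)
      = (∫ t in (((n:ℝ) - 1) * Δt)..((n:ℝ) * Δt), ‖φ' t‖ ^ 2)
        + ∫ t in ((n:ℝ) * Δt)..(((n:ℝ) + 1) * Δt), ‖φ' t‖ ^ 2 := by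
    intro n hn
    rw [Finset.mem_Ico] at hn
    have hn1 : (1:ℝ) ≤ (n:ℝ) := by exact_mod_cast hn.1
    have hnN : (n:ℝ) + 1 ≤ (N:ℝ) := by exact_mod_cast (hn.2 : n + 1 ≤ N)
    refine (intervalIntegral.integral_add_adjacent_intervals ?_ ?_).symm
    · exact hfi _ _ (by nlinarith) (by nlinarith) (by rw [← hNT]; nlinarith)
    · exact hfi _ _ (by nlinarith) (by nlinarith) (by rw [← hNT]; nlinarith)
  -- first telescoping sum
  have htel1 : ∑ n ∈ Finset.Ico 1 N,
      (∫ t in (((n:ℝ) - 1) * Δt)..((n:ℝ) * Δt), ‖φ' t‖ ^ 2)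
      = ∫ t in (0:ℝ)..(((N:ℝ) - 1) * Δt), ‖φ' t‖ ^ 2 := by
    have := intervalIntegral.sum_integral_adjacent_intervals
      (f := fun t => ‖φ' t‖ ^ 2) (μ := volume)
      (a := fun k => (k:ℝ) * Δt) (n := N - 1)
      (fun k hk => by
        refine hfi _ _ (by positivity) ?_ ?_
        · have : (k:ℝ) ≤ (k:ℝ) + 1 := by linarith
          push_cast; nlinarith
        · rw [← hNT]
          have : (k:ℝ) + 1 ≤ (N:ℝ) := by
            have : k + 1 ≤ N := by omega
            exact_mod_cast this
          push_cast; nlinarith)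
    rw [Finset.sum_Ico_eq_sum_range]
    rw [show (0:ℝ) = ((0:ℕ):ℝ) * Δt by simp, show ((N:ℝ) - 1) = ((N-1:ℕ):ℝ) by
      push_cast [Nat.cast_sub (by omega : 1 ≤ N)]; ring]
    rw [← this]
    refine Finset.sum_congr rfl fun k hk => ?_
    congr 1 <;> push_cast <;> ring
  -- second telescoping sum
  have htel2 : ∑ n ∈ Finset.Ico 1 N,
      (∫ t in ((n:ℝ) * Δt)..(((n:ℝ) + 1) * Δt), ‖φ' t‖ ^ 2)
      = ∫ t in (1 * Δt)..((N:ℝ) * Δt), ‖φ' t‖ ^ 2 := by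
    have := intervalIntegral.sum_integral_adjacent_intervals_Ico
      (f := fun t => ‖φ' t‖ ^ 2) (μ := volume)
      (a := fun k => (k:ℝ) * Δt) (m := 1) (n := N) (by omega)
      (fun k hk => by
        rw [Set.mem_Ico] at hk
        refine hfi _ _ (by positivity) ?_ ?_
        · have : (k:ℝ) ≤ (k:ℝ) + 1 := by linarith
          push_cast; nlinarith
        · rw [← hNT]
          have : (k:ℝ) + 1 ≤ (N:ℝ) := by exact_mod_cast (hk.2 : k + 1 ≤ N)
          push_cast; nlinarith)
    rw [show ((1:ℝ) * Δt) = ((1:ℕ):ℝ) * Δt by norm_num, ← this]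
    refine Finset.sum_congr rfl fun k hk => ?_
    congr 1 <;> push_cast <;> ring
  -- domination by the full integral
  have hnn : 0 ≤ᵐ[volume.restrict (Set.Ioc (0:ℝ) T)] fun t => ‖φ' t‖ ^ 2 :=
    ae_of_all _ fun t => by positivity
  have hfull := hfi 0 T le_rfl hT.le le_rfl
  have hmono1 : (∫ t in (0:ℝ)..(((N:ℝ) - 1) * Δt), ‖φ' t‖ ^ 2)
      ≤ ∫ t in (0:ℝ)..T, ‖φ' t‖ ^ 2 := by
    refine intervalIntegral.integral_mono_interval le_rfl ?_ ?_ hnn hfull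
    · have : (1:ℝ) ≤ (N:ℝ) := by exact_mod_cast (by omega : 1 ≤ N)
      nlinarith
    · rw [← hNT]; nlinarith [hΔpos]
  have hmono2 : (∫ t in (1 * Δt)..((N:ℝ) * Δt), ‖φ' t‖ ^ 2)
      ≤ ∫ t in (0:ℝ)..T, ‖φ' t‖ ^ 2 := by
    refine intervalIntegral.integral_mono_interval (by linarith) ?_ ?_ hnn hfull
    · have : (1:ℝ) ≤ (N:ℝ) := by exact_mod_cast (by omega : 1 ≤ N)
      nlinarith
    · rw [hNT]
  -- put everything together
  have key : ∑ n ∈ Finset.Ico 1 N,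
      (∫ t in (((n:ℝ) - 1) * Δt)..(((n:ℝ) + 1) * Δt), ‖φ' t‖ ^ 2)
      ≤ 2 * ∫ t in (0:ℝ)..T, ‖φ' t‖ ^ 2 := by
    rw [Finset.sum_congr rfl hintn, Finset.sum_add_distrib, htel1, htel2]
    linarith
  calc Δt * ∑ n ∈ Finset.Ico 1 N,
        ‖(2 * Δt)⁻¹ • (φ (((n : ℝ) + 1) * Δt) - φ (((n : ℝ) - 1) * Δt))‖ ^ 2
      ≤ Δt * ((2 * Δt)⁻¹ * ∑ n ∈ Finset.Ico 1 N,
          ∫ t in (((n:ℝ) - 1) * Δt)..(((n:ℝ) + 1) * Δt), ‖φ' t‖ ^ 2) :=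
        mul_le_mul_of_nonneg_left hsum hΔpos.le
    _ = (1/2) * ∑ n ∈ Finset.Ico 1 N,
          ∫ t in (((n:ℝ) - 1) * Δt)..(((n:ℝ) + 1) * Δt), ‖φ' t‖ ^ 2 := by
        field_simp
    _ ≤ (1/2) * (2 * ∫ t in (0:ℝ)..T, ‖φ' t‖ ^ 2) := by
        exact mul_le_mul_of_nonneg_left key (by norm_num)
    _ = ∫ t in (0:ℝ)..T, ‖φ' t‖ ^ 2 := by ring
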